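/- For any positive integers n and l, the complete bipartite graph K_{n, n·l} has an interval total coloring whose minimum span equals its total chromatic number; in particular, for l ≥ 2, w_τ(K_{n,n·l}) = n·l + 1. -/

import Mathlib

namespace ITC

variable {V : Type*}

/-- A total coloring: proper on vertices, edges, and incident vertex-edge pairs. -/
def IsTotalColoring (G : SimpleGraph V) (cv : V → ℕ) (ce : Sym2 V → ℕ) : Prop :=
  (∀ u v, G.Adj u v → cv u ≠ cv v) ∧
  (∀ e f, e ∈ G.edgeSet → f ∈ G.edgeSet → e ≠ f → (∃ w, w ∈ e ∧ w ∈ f) → ce e ≠ ce f) ∧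
  (∀ v e, e ∈ G.edgeSet → v ∈ e → cv v ≠ ce e)

/-- The set of colors on a vertex `v` together with its incident edges. -/
def palette (G : SimpleGraph V) (cv : V → ℕ) (ce : Sym2 V → ℕ) (v : V) : Set ℕ :=
  insert (cv v) {c | ∃ e ∈ G.edgeSet, v ∈ e ∧ ce e = c}

/-- Degree of a vertex. -/
noncomputable def deg (G : SimpleGraph V) (v : V) : ℕ := (G.neighborSet v).ncard

/-- An interval total `t`-coloring. -/
def IsIntervalTotalColoring (G : SimpleGraph V) (t : ℕ) (cv : V → ℕ)
    (ce : Sym2 V → ℕ) : Prop :=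
  IsTotalColoring G cv ce ∧
  (∀ v, cv v ∈ Set.Icc 1 t) ∧ (∀ e ∈ G.edgeSet, ce e ∈ Set.Icc 1 t) ∧
  (∀ c ∈ Set.Icc 1 t, (∃ v, cv v = c) ∨ (∃ e ∈ G.edgeSet, ce e = c)) ∧
  (∀ v, ∃ a, palette G cv ce v = Set.Icc a (a + deg G v))

def HasIntervalTotalColoring (G : SimpleGraph V) (t : ℕ) : Prop :=
  ∃ cv ce, IsIntervalTotalColoring G t cv ce

/-- Minimum span of interval total colorings. -/
noncomputable def wtau (G : SimpleGraph V) : ℕ := sInf {t | HasIntervalTotalColoring G t}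

/-- Maximum span of interval total colorings. -/
noncomputable def Wtau (G : SimpleGraph V) : ℕ := sSup {t | HasIntervalTotalColoring G t}

/-- Total chromatic number: least `k` such that there is a total coloring
with colors in `{1, …, k}`. -/
noncomputable def totalChromaticNumber (G : SimpleGraph V) : ℕ :=
  sInf {k | ∃ cv ce, IsTotalColoring G cv ce ∧ (∀ v, cv v ∈ Set.Icc 1 k) ∧
    ∀ e ∈ G.edgeSet, ce e ∈ Set.Icc 1 k}

/-- A proper edge coloring. -/
def IsProperEdgeColoring (G : SimpleGraph V) (ce : Sym2 V → ℕ) : Prop :=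
  ∀ e f, e ∈ G.edgeSet → f ∈ G.edgeSet → e ≠ f → (∃ w, w ∈ e ∧ w ∈ f) → ce e ≠ ce f

/-- Colors appearing on the edges incident to `v`. -/
def edgePalette (G : SimpleGraph V) (ce : Sym2 V → ℕ) (v : V) : Set ℕ :=
  {c | ∃ e ∈ G.edgeSet, v ∈ e ∧ ce e = c}

/-- An interval (edge) `t`-coloring. -/
def IsIntervalEdgeColoring (G : SimpleGraph V) (t : ℕ) (ce : Sym2 V → ℕ) : Prop :=
  IsProperEdgeColoring G ce ∧
  (∀ e ∈ G.edgeSet, ce e ∈ Set.Icc 1 t) ∧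
  (∀ c ∈ Set.Icc 1 t, ∃ e ∈ G.edgeSet, ce e = c) ∧
  (∀ v, ∃ a, edgePalette G ce v = Set.Icc (a + 1) (a + deg G v))

/-- The hypercube `Q_n`. -/
def hypercube (n : ℕ) : SimpleGraph (Fin n → Bool) where
  Adj u v := ∃! i, u i ≠ v i
  symm := by
    constructor
    rintro u v ⟨i, hi, hu⟩
    exact ⟨i, Ne.symm hi, fun j hj => hu j (Ne.symm hj)⟩
  loopless := by
    constructor
    rintro u ⟨i, hi, -⟩
    exact hi rfl

/-- The complete graph on `Fin (2*r)` minus the perfect matching joining `i` and `i+r`. -/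
def Kminus (r : ℕ) : SimpleGraph (Fin (2 * r)) where
  Adj i j := i ≠ j ∧ ¬((i : ℕ) + r = (j : ℕ) ∨ (j : ℕ) + r = (i : ℕ))
  symm := by
    constructor
    rintro i j ⟨h1, h2⟩
    exact ⟨h1.symm, fun h => h2 h.symm⟩
  loopless := by
    constructor
    rintro i ⟨h1, -⟩
    exact h1 rfl

/-- Blow up each vertex of `H` into a copy of `β` (no edges inside copies). -/
def blowup {α : Type*} (H : SimpleGraph α) (β : Type*) : SimpleGraph (α × β) where
  Adj u v := H.Adj u.1 v.1
  symm := ⟨fun _ _ h => H.adj_symm h⟩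
  loopless := ⟨fun u h => H.ne_of_adj h rfl⟩

-- abbreviation for the graph
abbrev KB (n m : ℕ) : SimpleGraph (Fin n ⊕ Fin m) := completeBipartiteGraph (Fin n) (Fin m)

lemma KB_adj {n m : ℕ} (u : Fin n) (v : Fin m) : (KB n m).Adj (Sum.inl u) (Sum.inr v) := by
  simp [completeBipartiteGraph]

lemma edge_form {n m : ℕ} {e : Sym2 (Fin n ⊕ Fin m)} (he : e ∈ (KB n m).edgeSet) :
    ∃ u v, e = s(Sum.inl u, Sum.inr v) := by
  induction e with
  | _ a b =>
    rw [SimpleGraph.mem_edgeSet] at he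
    rcases a with u | v <;> rcases b with u' | v'
    · simp [completeBipartiteGraph] at he
    · exact ⟨u, v', rfl⟩
    · exact ⟨u', v, Sym2.eq_swap⟩
    · simp [completeBipartiteGraph] at he

lemma mem_edge_iff {n m : ℕ} {x : Fin n ⊕ Fin m} {u : Fin n} {v : Fin m} :
    x ∈ s(Sum.inl u, Sum.inr v) ↔ x = Sum.inl u ∨ x = Sum.inr v := Sym2.mem_iff

lemma edge_eq_iff {n m : ℕ} {u u' : Fin n} {v v' : Fin m} :
    s((Sum.inl u : Fin n ⊕ Fin m), Sum.inr v) = s(Sum.inl u', Sum.inr v') ↔ u = u' ∧ v = v' := by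
  rw [Sym2.eq_iff]
  constructor
  · rintro (⟨h1, h2⟩ | ⟨h1, h2⟩)
    · exact ⟨Sum.inl_injective h1, Sum.inr_injective h2⟩
    · exact absurd h1 (by simp)
  · rintro ⟨rfl, rfl⟩; left; exact ⟨rfl, rfl⟩

lemma deg_inl {n m : ℕ} (u : Fin n) : deg (KB n m) (Sum.inl u) = m := by
  have h : (KB n m).neighborSet (Sum.inl u) = Set.range (Sum.inr : Fin m → Fin n ⊕ Fin m) := by
    ext x
    rcases x with u' | v' <;> simp [SimpleGraph.neighborSet, completeBipartiteGraph]
  rw [deg, h, Set.ncard_eq_toFinset_card']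
  simp [Set.toFinset_range, Finset.card_image_of_injective _ Sum.inr_injective]

lemma deg_inr {n m : ℕ} (v : Fin m) : deg (KB n m) (Sum.inr v) = n := by
  have h : (KB n m).neighborSet (Sum.inr v) = Set.range (Sum.inl : Fin n → Fin n ⊕ Fin m) := by
    ext x
    rcases x with u' | v' <;> simp [SimpleGraph.neighborSet, completeBipartiteGraph]
  rw [deg, h, Set.ncard_eq_toFinset_card']
  simp [Set.toFinset_range, Finset.card_image_of_injective _ Sum.inl_injective]

lemma sInf_eq_of {S : Set ℕ} {a : ℕ} (ha : a ∈ S) (hb : ∀ t ∈ S, a ≤ t) : sInf S = a :=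
  le_antisymm (Nat.sInf_le ha) (le_csInf ⟨a, ha⟩ hb)

-- lower bound: any total coloring uses at least m+1 colors
lemma lower_m {n m t : ℕ} (hn : 0 < n) {cv ce}
    (h : IsTotalColoring (KB n m) cv ce)
    (hcv : ∀ v, cv v ∈ Set.Icc 1 t) (hce : ∀ e ∈ (KB n m).edgeSet, ce e ∈ Set.Icc 1 t) :
    m + 1 ≤ t := by
  classical
  obtain ⟨hv, hee, hve⟩ := h
  set u0 : Fin n := ⟨0, hn⟩ with hu0
  set f : Fin (m + 1) → ℕ := fun i =>
    if h : (i : ℕ) = 0 then cv (Sum.inl u0) else ce s(Sum.inl u0, Sum.inr ⟨(i:ℕ)-1, by omega⟩)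
    with hf
  have hmem : ∀ i, f i ∈ Finset.Icc 1 t := by
    intro i
    by_cases h0 : (i : ℕ) = 0
    · rw [hf]; simp only [dif_pos h0]
      simpa [Finset.mem_Icc] using hcv (Sum.inl u0)
    · rw [hf]; simp only [dif_neg h0]
      simpa [Finset.mem_Icc] using hce _ (KB_adj u0 _)
  have hinj : Function.Injective f := by
    intro i j hij
    simp only [hf] at hij
    by_cases hi : (i:ℕ) = 0 <;> by_cases hj : (j:ℕ) = 0
    · exact Fin.ext (by omega)
    · rw [dif_pos hi, dif_neg hj] at hij
      exact absurd hij (hve _ _ (KB_adj u0 _) (Sym2.mem_mk_left _ _))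
    · rw [dif_neg hi, dif_pos hj] at hij
      exact absurd hij.symm (hve _ _ (KB_adj u0 _) (Sym2.mem_mk_left _ _))
    · rw [dif_neg hi, dif_neg hj] at hij
      by_contra hne
      refine hee _ _ (KB_adj u0 _) (KB_adj u0 _) ?_
        ⟨Sum.inl u0, Sym2.mem_mk_left _ _, Sym2.mem_mk_left _ _⟩ hij
      rw [Ne, edge_eq_iff]
      rintro ⟨-, h2⟩
      have := congrArg Fin.val h2
      simp only [] at this
      exact hne (Fin.ext (by omega))
  have hsub : Finset.image f Finset.univ ⊆ Finset.Icc 1 t :=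
    Finset.image_subset_iff.mpr (fun i _ => hmem i)
  have hcard := Finset.card_le_card hsub
  rw [Finset.card_image_of_injective _ hinj, Finset.card_univ, Fintype.card_fin,
    Nat.card_Icc] at hcard
  omega


/-! ### Arithmetic helpers -/

lemma arith1 {n l b r : ℕ} (hb : b < l) (hr : r < n) : b * n + r + 1 ≤ n * l := by
  have h1 : (b + 1) * n ≤ l * n := Nat.mul_le_mul_right n hb
  nlinarith

lemma div_lt' {n l v : ℕ} (hn : 0 < n) (hv : v < n * l) : v / n < l := by
  rw [Nat.div_lt_iff_lt_mul hn, mul_comm l n]; exact hv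

lemma div_mod_unique2 {n b b' r r' : ℕ} (hr : r < n) (hr' : r' < n)
    (h : b * n + r = b' * n + r') : b = b' ∧ r = r' := by
  have hn : 0 < n := Nat.pos_of_ne_zero (by omega)
  have e1 : (b * n + r) / n = b := by
    rw [mul_comm, Nat.mul_add_div hn, Nat.div_eq_of_lt hr, add_zero]
  have e2 : (b' * n + r') / n = b' := by
    rw [mul_comm, Nat.mul_add_div hn, Nat.div_eq_of_lt hr', add_zero]
  have hbb : b = b' := by rw [← e1, ← e2, h]
  subst hbb
  exact ⟨rfl, by omega⟩

lemma div_mod_of {n b j : ℕ} (hj : j < n) : (b * n + j) / n = b ∧ (b * n + j) % n = j := by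
  have hn : 0 < n := Nat.pos_of_ne_zero (by omega)
  constructor
  · rw [mul_comm, Nat.mul_add_div hn, Nat.div_eq_of_lt hj, add_zero]
  · rw [mul_comm, Nat.mul_add_mod, Nat.mod_eq_of_lt hj]

lemma mod_inj_left {n u u' j : ℕ} (hu : u < n) (hu' : u' < n)
    (h : (u + j) % n = (u' + j) % n) : u = u' := by
  have h2 : u ≡ u' [MOD n] := Nat.ModEq.add_right_cancel' j h
  rwa [Nat.ModEq, Nat.mod_eq_of_lt hu, Nat.mod_eq_of_lt hu'] at h2

lemma mod_target {n u s : ℕ} (hu : u < n) (hs : s < n) :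
    (u + (if u ≤ s then s - u else s + n - u)) % n = s := by
  split
  · rw [Nat.add_sub_cancel' ‹u ≤ s›, Nat.mod_eq_of_lt hs]
  · have h : u + (s + n - u) = s + n := by omega
    rw [h, Nat.add_mod_right, Nat.mod_eq_of_lt hs]

lemma mod_target_lt {n u s : ℕ} (hu : u < n) (hs : s < n) :
    (if u ≤ s then s - u else s + n - u) < n := by split <;> omega

/-! ### The edge coloring -/

/-- Edge color of the edge between left `u` and right `v`. -/
def F (n : ℕ) {m : ℕ} (u : Fin n) (v : Fin m) : ℕ :=
  (v.1 / n) * n + (u.1 + v.1) % n + 1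

def gfun (n m : ℕ) : Fin n ⊕ Fin m → Fin n ⊕ Fin m → ℕ := fun x y =>
  match x, y with
  | Sum.inl u, Sum.inr v => F n u v
  | Sum.inr v, Sum.inl u => F n u v
  | _, _ => 0

noncomputable def ceA (n m : ℕ) : Sym2 (Fin n ⊕ Fin m) → ℕ :=
  Sym2.lift ⟨gfun n m, by
    intro x y
    rcases x with u | v <;> rcases y with u' | v' <;> rfl⟩

@[simp] lemma ceA_mk {n m : ℕ} (u : Fin n) (v : Fin m) :
    ceA n m s(Sum.inl u, Sum.inr v) = F n u v := rfl

lemma F_inj_right {n m : ℕ} (hn : 0 < n) {u : Fin n} {v v' : Fin m}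
    (h : F n u v = F n u v') : v = v' := by
  unfold F at h
  have h0 : (v.1 / n) * n + (u.1 + v.1) % n = (v'.1 / n) * n + (u.1 + v'.1) % n := by omega
  obtain ⟨hb, hr⟩ := div_mod_unique2 (Nat.mod_lt (u.1 + v.1) hn) (Nat.mod_lt (u.1 + v'.1) hn) h0
  have h2 : v.1 ≡ v'.1 [MOD n] := Nat.ModEq.add_left_cancel' u.1 hr
  have h3 : v.1 % n = v'.1 % n := h2
  have h4 := Nat.div_add_mod v.1 n
  have h5 := Nat.div_add_mod v'.1 n
  have : v.1 = v'.1 := by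
    have e1 : n * (v.1 / n) = n * (v'.1 / n) := by rw [hb]
    omega
  exact Fin.ext this

lemma F_inj_left {n m : ℕ} (hn : 0 < n) {u u' : Fin n} {v : Fin m}
    (h : F n u v = F n u' v) : u = u' := by
  unfold F at h
  have h1 : (u.1 + v.1) % n = (u'.1 + v.1) % n := by omega
  exact Fin.ext (mod_inj_left u.2 u'.2 h1)

lemma F_bounds {n l : ℕ} (hn : 0 < n) (u : Fin n) (v : Fin (n * l)) :
    1 ≤ F n u v ∧ F n u v ≤ n * l := by
  refine ⟨by unfold F; omega, ?_⟩
  exact arith1 (div_lt' hn v.2) (Nat.mod_lt _ hn)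

/-- Edge colors at left vertex `u` hit every value in `[1, n*l]`. -/
lemma F_surj_left {n l : ℕ} (hn : 0 < n) (u : Fin n) {c : ℕ} (hc1 : 1 ≤ c)
    (hc2 : c ≤ n * l) : ∃ v : Fin (n * l), F n u v = c := by
  set b := (c - 1) / n with hbdef
  set s := (c - 1) % n with hsdef
  have hs : s < n := Nat.mod_lt _ hn
  have hb : b < l := div_lt' hn (by omega)
  set j := if u.1 ≤ s then s - u.1 else s + n - u.1 with hjdef
  have hjlt : j < n := mod_target_lt u.2 hs
  have hvlt : b * n + j < n * l := by
    have := arith1 hb hjlt; omega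
  refine ⟨⟨b * n + j, hvlt⟩, ?_⟩
  obtain ⟨e1, e2⟩ := div_mod_of (n := n) (b := b) hjlt
  have e3 : (u.1 + (b * n + j)) % n = (u.1 + j) % n := by
    have h : u.1 + (b * n + j) = u.1 + j + b * n := by ring
    rw [h, Nat.add_mul_mod_self_right]
  have e4 : (u.1 + j) % n = s := mod_target u.2 hs
  have h4 : n * b + s = c - 1 := by rw [hbdef, hsdef]; exact Nat.div_add_mod _ _
  show (b * n + j) / n * n + (u.1 + (b * n + j)) % n + 1 = c
  rw [e1, e3, e4]
  have hc : n * b = b * n := mul_comm _ _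
  omega

/-- Edge colors at right vertex `v` hit every value in `[(v/n)*n+1, (v/n)*n+n]`. -/
lemma F_surj_right {n m : ℕ} (hn : 0 < n) (v : Fin m) {c : ℕ}
    (hc1 : (v.1 / n) * n + 1 ≤ c) (hc2 : c ≤ (v.1 / n) * n + n) :
    ∃ u : Fin n, F n u v = c := by
  set s := c - (v.1 / n) * n - 1 with hsdef
  have hs : s < n := by omega
  set j := v.1 % n with hjdef
  have hj : j < n := Nat.mod_lt _ hn
  set u := if j ≤ s then s - j else s + n - j with hudef
  have hult : u < n := mod_target_lt hj hs
  refine ⟨⟨u, hult⟩, ?_⟩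
  have e1 : (u + v.1) % n = s := by
    have h0 : n * (v.1 / n) + j = v.1 := Nat.div_add_mod v.1 n
    have e2 : u + v.1 = j + u + (v.1 / n) * n := by
      have hc : n * (v.1 / n) = (v.1 / n) * n := mul_comm _ _
      omega
    rw [e2, Nat.add_mul_mod_self_right]
    rw [hudef, mod_target hj hs]
  show v.1 / n * n + (u + v.1) % n + 1 = c
  rw [e1]
  omega


lemma inc_left {n m : ℕ} {u : Fin n} {c : ℕ} :
    (∃ e ∈ (KB n m).edgeSet, Sum.inl u ∈ e ∧ ceA n m e = c) ↔ ∃ v : Fin m, F n u v = c := by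
  constructor
  · rintro ⟨e, he, hmem, hc⟩
    obtain ⟨u', v', rfl⟩ := edge_form he
    rcases mem_edge_iff.mp hmem with h | h
    · obtain rfl : u = u' := Sum.inl_injective h
      exact ⟨v', hc⟩
    · exact absurd h (by simp)
  · rintro ⟨v, hv⟩
    exact ⟨s(Sum.inl u, Sum.inr v), KB_adj u v, Sym2.mem_mk_left _ _, hv⟩

lemma inc_right {n m : ℕ} {v : Fin m} {c : ℕ} :
    (∃ e ∈ (KB n m).edgeSet, Sum.inr v ∈ e ∧ ceA n m e = c) ↔ ∃ u : Fin n, F n u v = c := by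
  constructor
  · rintro ⟨e, he, hmem, hc⟩
    obtain ⟨u', v', rfl⟩ := edge_form he
    rcases mem_edge_iff.mp hmem with h | h
    · exact absurd h (by simp)
    · obtain rfl : v = v' := Sum.inr_injective h
      exact ⟨u', hc⟩
  · rintro ⟨u, hu⟩
    exact ⟨s(Sum.inl u, Sum.inr v), KB_adj u v, Sym2.mem_mk_right _ _, hu⟩

/-- Vertex coloring for the case `l ≥ 2`. -/
def cvA (n m : ℕ) : Fin n ⊕ Fin m → ℕ := fun x =>
  match x with
  | Sum.inl _ => m + 1
  | Sum.inr v => if v.1 / n = 0 then n + 1 else (v.1 / n) * n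

lemma cvA_inr_bounds {n l : ℕ} (hn : 0 < n) (hl : 2 ≤ l) (v : Fin (n * l)) :
    1 ≤ cvA n (n * l) (Sum.inr v) ∧ cvA n (n * l) (Sum.inr v) ≤ n * l := by
  have hb : v.1 / n < l := div_lt' hn v.2
  show 1 ≤ (if v.1 / n = 0 then n + 1 else (v.1 / n) * n) ∧
    (if v.1 / n = 0 then n + 1 else (v.1 / n) * n) ≤ n * l
  by_cases h0 : v.1 / n = 0
  · rw [if_pos h0]
    exact ⟨by omega, by nlinarith⟩
  · rw [if_neg h0]
    have hb1 : 1 ≤ v.1 / n := Nat.pos_of_ne_zero h0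
    exact ⟨by nlinarith, by nlinarith⟩

/-- The construction for `l ≥ 2`. -/
lemma constructionA {n l m : ℕ} (hn : 0 < n) (hl : 2 ≤ l) (hm : m = n * l) :
    IsIntervalTotalColoring (KB n m) (m + 1) (cvA n m) (ceA n m) := by
  subst hm
  have hFb : ∀ (u : Fin n) (v : Fin (n * l)), 1 ≤ F n u v ∧ F n u v ≤ n * l :=
    fun u v => F_bounds hn u v
  refine ⟨⟨?_, ?_, ?_⟩, ?_, ?_, ?_, ?_⟩
  · -- vertex proper
    rintro (u | v) (u' | v') hadj
    · simp [completeBipartiteGraph] at hadj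
    · have := (cvA_inr_bounds hn hl v').2
      show n * l + 1 ≠ cvA n (n * l) (Sum.inr v')
      omega
    · have := (cvA_inr_bounds hn hl v).2
      show cvA n (n * l) (Sum.inr v) ≠ n * l + 1
      omega
    · simp [completeBipartiteGraph] at hadj
  · -- edge proper
    intro e f he hf hef ⟨w, hwe, hwf⟩
    obtain ⟨u, v, rfl⟩ := edge_form he
    obtain ⟨u', v', rfl⟩ := edge_form hf
    rw [ceA_mk, ceA_mk]
    rcases mem_edge_iff.mp hwe with rfl | rfl
    · rcases mem_edge_iff.mp hwf with h | h
      · obtain rfl : u = u' := Sum.inl_injective h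
        intro hcc
        obtain rfl := F_inj_right hn hcc
        exact hef rfl
      · exact absurd h (by simp)
    · rcases mem_edge_iff.mp hwf with h | h
      · exact absurd h (by simp)
      · obtain rfl : v = v' := Sum.inr_injective h
        intro hcc
        obtain rfl := F_inj_left hn hcc
        exact hef rfl
  · -- vertex-edge
    intro x e he hx
    obtain ⟨u, v, rfl⟩ := edge_form he
    rw [ceA_mk]
    have hb : v.1 / n < l := div_lt' hn v.2
    have hr : (u.1 + v.1) % n < n := Nat.mod_lt _ hn
    rcases mem_edge_iff.mp hx with rfl | rfl
    · show n * l + 1 ≠ F n u v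
      have := (hFb u v).2
      omega
    · show (if v.1 / n = 0 then n + 1 else (v.1 / n) * n) ≠ F n u v
      unfold F
      split
      · rename_i h0
        rw [h0]
        omega
      · omega
  · -- cv bounds
    rintro (u | v)
    · have h : cvA n (n * l) (Sum.inl u) = n * l + 1 := rfl
      simp only [Set.mem_Icc, h]
      omega
    · have := cvA_inr_bounds hn hl v
      simp only [Set.mem_Icc]
      omega
  · -- ce bounds
    intro e he
    obtain ⟨u, v, rfl⟩ := edge_form he
    rw [ceA_mk]
    have := hFb u v
    simp only [Set.mem_Icc]
    omega
  · -- all colors used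
    intro c hc
    simp only [Set.mem_Icc] at hc
    by_cases hcm : c = n * l + 1
    · exact Or.inl ⟨Sum.inl ⟨0, hn⟩, hcm.symm⟩
    · obtain ⟨v, hv⟩ := F_surj_left (l := l) hn (⟨0, hn⟩ : Fin n) hc.1 (by omega)
      exact Or.inr ⟨s(Sum.inl ⟨0, hn⟩, Sum.inr v), KB_adj _ _, hv⟩
  · -- palettes
    rintro (u | v)
    · refine ⟨1, ?_⟩
      rw [deg_inl]
      ext c
      simp only [palette, Set.mem_insert_iff, Set.mem_setOf_eq, Set.mem_Icc]
      constructor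
      · rintro (rfl | hc)
        · show 1 ≤ cvA n (n * l) (Sum.inl u) ∧ cvA n (n * l) (Sum.inl u) ≤ 1 + n * l
          show 1 ≤ n * l + 1 ∧ n * l + 1 ≤ 1 + n * l
          omega
        · obtain ⟨v, hv⟩ := inc_left.mp hc
          have := hFb u v
          omega
      · rintro ⟨h1, h2⟩
        by_cases hcm : c = n * l + 1
        · left; exact hcm
        · right
          exact inc_left.mpr (F_surj_left hn u h1 (by omega))
    · refine ⟨if v.1 / n = 0 then 1 else (v.1 / n) * n, ?_⟩
      rw [deg_inr]
      have hb : v.1 / n < l := div_lt' hn v.2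
      ext c
      simp only [palette, Set.mem_insert_iff, Set.mem_setOf_eq, Set.mem_Icc]
      constructor
      · rintro (rfl | hc)
        · have hcv : cvA n (n * l) (Sum.inr v) =
              if v.1 / n = 0 then n + 1 else (v.1 / n) * n := rfl
          rw [hcv]
          by_cases h0 : v.1 / n = 0
          · rw [if_pos h0, if_pos h0]
            omega
          · rw [if_neg h0, if_neg h0]
            omega
        · obtain ⟨u, hu⟩ := inc_right.mp hc
          have hr : (u.1 + v.1) % n < n := Nat.mod_lt _ hn
          unfold F at hu
          by_cases h0 : v.1 / n = 0
          · rw [if_pos h0]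
            rw [h0] at hu
            omega
          · rw [if_neg h0]
            omega
      · rintro ⟨h1, h2⟩
        by_cases h0 : v.1 / n = 0
        · rw [if_pos h0] at h1 h2
          by_cases hcv : c = n + 1
          · left
            show c = if v.1 / n = 0 then n + 1 else (v.1 / n) * n
            rw [if_pos h0, hcv]
          · right
            refine inc_right.mpr (F_surj_right hn v ?_ ?_) <;> rw [h0] <;> omega
        · rw [if_neg h0] at h1 h2
          by_cases hcv : c = (v.1 / n) * n
          · left
            show c = if v.1 / n = 0 then n + 1 else (v.1 / n) * n
            rw [if_neg h0, hcv]
          · right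
            exact inc_right.mpr (F_surj_right hn v (by omega) (by omega))


/-! ### Case l = 1 : K_{n,n} with n+2 colors -/

def FC (n : ℕ) {m : ℕ} (u : Fin n) (v : Fin m) : ℕ := (u.1 + v.1) % n + 2

def gC (n m : ℕ) : Fin n ⊕ Fin m → Fin n ⊕ Fin m → ℕ := fun x y =>
  match x, y with
  | Sum.inl u, Sum.inr v => FC n u v
  | Sum.inr v, Sum.inl u => FC n u v
  | _, _ => 0

noncomputable def ceC (n m : ℕ) : Sym2 (Fin n ⊕ Fin m) → ℕ :=
  Sym2.lift ⟨gC n m, by intro x y; rcases x with u | v <;> rcases y with u' | v' <;> rfl⟩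

@[simp] lemma ceC_mk {n m : ℕ} (u : Fin n) (v : Fin m) :
    ceC n m s(Sum.inl u, Sum.inr v) = FC n u v := rfl

def cvC (n m : ℕ) : Fin n ⊕ Fin m → ℕ := fun x =>
  match x with
  | Sum.inl _ => 1
  | Sum.inr _ => n + 2

lemma incC_left {n m : ℕ} {u : Fin n} {c : ℕ} :
    (∃ e ∈ (KB n m).edgeSet, Sum.inl u ∈ e ∧ ceC n m e = c) ↔ ∃ v : Fin m, FC n u v = c := by
  constructor
  · rintro ⟨e, he, hmem, hc⟩
    obtain ⟨u', v', rfl⟩ := edge_form he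
    rcases mem_edge_iff.mp hmem with h | h
    · obtain rfl : u = u' := Sum.inl_injective h
      exact ⟨v', hc⟩
    · exact absurd h (by simp)
  · rintro ⟨v, hv⟩
    exact ⟨s(Sum.inl u, Sum.inr v), KB_adj u v, Sym2.mem_mk_left _ _, hv⟩

lemma incC_right {n m : ℕ} {v : Fin m} {c : ℕ} :
    (∃ e ∈ (KB n m).edgeSet, Sum.inr v ∈ e ∧ ceC n m e = c) ↔ ∃ u : Fin n, FC n u v = c := by
  constructor
  · rintro ⟨e, he, hmem, hc⟩
    obtain ⟨u', v', rfl⟩ := edge_form he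
    rcases mem_edge_iff.mp hmem with h | h
    · exact absurd h (by simp)
    · obtain rfl : v = v' := Sum.inr_injective h
      exact ⟨u', hc⟩
  · rintro ⟨u, hu⟩
    exact ⟨s(Sum.inl u, Sum.inr v), KB_adj u v, Sym2.mem_mk_right _ _, hu⟩

lemma FC_surj_left {n m : ℕ} (hn : 0 < n) (hm : m = n) (u : Fin n) {c : ℕ} (hc1 : 2 ≤ c)
    (hc2 : c ≤ n + 1) : ∃ v : Fin m, FC n u v = c := by
  set s := c - 2 with hsdef
  have hs : s < n := by omega
  refine ⟨⟨if u.1 ≤ s then s - u.1 else s + n - u.1, by have := mod_target_lt u.2 hs; omega⟩, ?_⟩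
  show (u.1 + if u.1 ≤ s then s - u.1 else s + n - u.1) % n + 2 = c
  rw [mod_target u.2 hs]
  omega

lemma FC_surj_right {n m : ℕ} (hn : 0 < n) (v : Fin m) (hv : v.1 < n) {c : ℕ} (hc1 : 2 ≤ c)
    (hc2 : c ≤ n + 1) : ∃ u : Fin n, FC n u v = c := by
  set s := c - 2 with hsdef
  have hs : s < n := by omega
  refine ⟨⟨if v.1 ≤ s then s - v.1 else s + n - v.1, mod_target_lt hv hs⟩, ?_⟩
  show ((if v.1 ≤ s then s - v.1 else s + n - v.1) + v.1) % n + 2 = c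
  rw [add_comm (if v.1 ≤ s then s - v.1 else s + n - v.1) v.1, mod_target hv hs]
  omega

lemma constructionC {n m : ℕ} (hn : 0 < n) (hm : m = n) :
    IsIntervalTotalColoring (KB n m) (n + 2) (cvC n m) (ceC n m) := by
  have hFb : ∀ (u : Fin n) (v : Fin m), 2 ≤ FC n u v ∧ FC n u v ≤ n + 1 := by
    intro u v
    have := Nat.mod_lt (u.1 + v.1) hn
    unfold FC
    omega
  refine ⟨⟨?_, ?_, ?_⟩, ?_, ?_, ?_, ?_⟩
  · rintro (u | v) (u' | v') hadj
    · simp [completeBipartiteGraph] at hadj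
    · show (1 : ℕ) ≠ n + 2; omega
    · show n + 2 ≠ 1; omega
    · simp [completeBipartiteGraph] at hadj
  · intro e f he hf hef ⟨w, hwe, hwf⟩
    obtain ⟨u, v, rfl⟩ := edge_form he
    obtain ⟨u', v', rfl⟩ := edge_form hf
    rw [ceC_mk, ceC_mk]
    rcases mem_edge_iff.mp hwe with rfl | rfl
    · rcases mem_edge_iff.mp hwf with h | h
      · obtain rfl : u = u' := Sum.inl_injective h
        intro hcc
        unfold FC at hcc
        have h1 : (u.1 + v.1) % n = (u.1 + v'.1) % n := by omega
        have h2 : v.1 ≡ v'.1 [MOD n] := Nat.ModEq.add_left_cancel' u.1 h1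
        have h3 : v.1 % n = v'.1 % n := h2
        rw [Nat.mod_eq_of_lt (by omega), Nat.mod_eq_of_lt (by omega)] at h3
        exact hef (by rw [Fin.ext h3])
      · exact absurd h (by simp)
    · rcases mem_edge_iff.mp hwf with h | h
      · exact absurd h (by simp)
      · obtain rfl : v = v' := Sum.inr_injective h
        intro hcc
        unfold FC at hcc
        have h1 : (u.1 + v.1) % n = (u'.1 + v.1) % n := by omega
        exact hef (by rw [Fin.ext (mod_inj_left u.2 u'.2 h1)])
  · intro x e he hx
    obtain ⟨u, v, rfl⟩ := edge_form he
    rw [ceC_mk]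
    have := hFb u v
    rcases mem_edge_iff.mp hx with rfl | rfl
    · show (1 : ℕ) ≠ FC n u v; omega
    · show n + 2 ≠ FC n u v; omega
  · rintro (u | v) <;> simp only [Set.mem_Icc]
    · show 1 ≤ 1 ∧ 1 ≤ n + 2; omega
    · show 1 ≤ n + 2 ∧ n + 2 ≤ n + 2; omega
  · intro e he
    obtain ⟨u, v, rfl⟩ := edge_form he
    rw [ceC_mk]
    have := hFb u v
    simp only [Set.mem_Icc]
    omega
  · intro c hc
    simp only [Set.mem_Icc] at hc
    by_cases h1 : c = 1
    · exact Or.inl ⟨Sum.inl ⟨0, hn⟩, h1.symm⟩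
    · by_cases h2 : c = n + 2
      · exact Or.inl ⟨Sum.inr ⟨0, by omega⟩, h2.symm⟩
      · obtain ⟨v, hv⟩ := FC_surj_left (c := c) hn hm (⟨0, hn⟩ : Fin n) (by omega) (by omega)
        exact Or.inr ⟨s(Sum.inl ⟨0, hn⟩, Sum.inr v), KB_adj _ _, hv⟩
  · rintro (u | v)
    · refine ⟨1, ?_⟩
      rw [deg_inl]
      ext c
      simp only [palette, Set.mem_insert_iff, Set.mem_setOf_eq, Set.mem_Icc]
      constructor
      · rintro (rfl | hc)
        · show 1 ≤ cvC n m (Sum.inl u) ∧ cvC n m (Sum.inl u) ≤ 1 + m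
          show 1 ≤ 1 ∧ 1 ≤ 1 + m
          omega
        · obtain ⟨v, hv⟩ := incC_left.mp hc
          have := hFb u v
          omega
      · rintro ⟨h1, h2⟩
        by_cases hc1 : c = 1
        · left; exact hc1
        · right
          exact incC_left.mpr (FC_surj_left (c := c) hn hm u (by omega) (by omega))
    · refine ⟨2, ?_⟩
      rw [deg_inr]
      ext c
      simp only [palette, Set.mem_insert_iff, Set.mem_setOf_eq, Set.mem_Icc]
      constructor
      · rintro (rfl | hc)
        · show 2 ≤ cvC n m (Sum.inr v) ∧ cvC n m (Sum.inr v) ≤ 2 + n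
          show 2 ≤ n + 2 ∧ n + 2 ≤ 2 + n
          omega
        · obtain ⟨u, hu⟩ := incC_right.mp hc
          have := hFb u v
          omega
      · rintro ⟨h1, h2⟩
        by_cases hc1 : c = n + 2
        · left; exact hc1
        · right
          exact incC_right.mpr (FC_surj_right (c := c) hn v (by omega) (by omega) (by omega))


lemma lower_nn {n m t : ℕ} (hn : 0 < n) (hm : m = n) {cv : Fin n ⊕ Fin m → ℕ}
    {ce : Sym2 (Fin n ⊕ Fin m) → ℕ}
    (h : IsTotalColoring (KB n m) cv ce)
    (hcv : ∀ v, cv v ∈ Set.Icc 1 t) (hce : ∀ e ∈ (KB n m).edgeSet, ce e ∈ Set.Icc 1 t) :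
    n + 2 ≤ t := by
  classical
  have hm1 := lower_m hn h hcv hce
  by_contra hlt
  have ht : t = n + 1 := by omega
  obtain ⟨hv, hee, hve⟩ := h
  set u0 : Fin n := ⟨0, hn⟩ with hu0
  have key : ∀ v : Fin m, ∃ u : Fin n, ce s(Sum.inl u, Sum.inr v) = cv (Sum.inl u0) := by
    intro v
    set f : Fin (n + 1) → ℕ := fun i =>
      if h : (i : ℕ) = 0 then cv (Sum.inr v)
      else ce s(Sum.inl ⟨(i : ℕ) - 1, by omega⟩, Sum.inr v) with hf
    have hmem : ∀ i, f i ∈ Finset.Icc 1 t := by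
      intro i
      by_cases h0 : (i : ℕ) = 0
      · rw [hf]; simp only [dif_pos h0]
        simpa [Finset.mem_Icc] using hcv (Sum.inr v)
      · rw [hf]; simp only [dif_neg h0]
        simpa [Finset.mem_Icc] using hce _ (KB_adj _ v)
    have hinj : Function.Injective f := by
      intro i j hij
      simp only [hf] at hij
      by_cases hi : (i:ℕ) = 0 <;> by_cases hj : (j:ℕ) = 0
      · exact Fin.ext (by omega)
      · rw [dif_pos hi, dif_neg hj] at hij
        exact absurd hij (hve _ _ (KB_adj _ v) (Sym2.mem_mk_right _ _))
      · rw [dif_neg hi, dif_pos hj] at hij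
        exact absurd hij.symm (hve _ _ (KB_adj _ v) (Sym2.mem_mk_right _ _))
      · rw [dif_neg hi, dif_neg hj] at hij
        by_contra hne
        refine hee _ _ (KB_adj _ v) (KB_adj _ v) ?_
          ⟨Sum.inr v, Sym2.mem_mk_right _ _, Sym2.mem_mk_right _ _⟩ hij
        rw [Ne, edge_eq_iff]
        rintro ⟨h2, -⟩
        have := congrArg Fin.val h2
        simp only [] at this
        exact hne (Fin.ext (by omega))
    have hsub : Finset.image f Finset.univ ⊆ Finset.Icc 1 t :=
      Finset.image_subset_iff.mpr fun i _ => hmem i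
    have hcardIcc : (Finset.Icc 1 t).card = n + 1 := by rw [Nat.card_Icc]; omega
    have hcardim : (Finset.image f Finset.univ).card = n + 1 := by
      rw [Finset.card_image_of_injective _ hinj, Finset.card_univ, Fintype.card_fin]
    have heq : Finset.image f Finset.univ = Finset.Icc 1 t :=
      Finset.eq_of_subset_of_card_le hsub (by omega)
    have hc0 : cv (Sum.inl u0) ∈ Finset.Icc 1 t := by
      simpa [Finset.mem_Icc] using hcv (Sum.inl u0)
    rw [← heq, Finset.mem_image] at hc0
    obtain ⟨i, -, hi⟩ := hc0
    by_cases h0 : (i : ℕ) = 0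
    · exfalso
      simp only [hf, dif_pos h0] at hi
      exact (hv _ _ (KB_adj u0 v)) hi.symm
    · simp only [hf, dif_neg h0] at hi
      exact ⟨⟨(i : ℕ) - 1, by omega⟩, hi⟩
  choose g hg using key
  have hginj : Function.Injective g := by
    intro v v' hgv
    by_contra hne
    refine hee s(Sum.inl (g v), Sum.inr v) s(Sum.inl (g v'), Sum.inr v')
      (KB_adj _ _) (KB_adj _ _) ?_ ?_ (by rw [hg v, hg v'])
    · rw [Ne, hgv, edge_eq_iff]
      rintro ⟨-, h2'⟩
      exact hne h2'
    · exact ⟨Sum.inl (g v), Sym2.mem_mk_left _ _, by rw [hgv]; exact Sym2.mem_mk_left _ _⟩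
  have hbij : Function.Bijective g :=
    (Fintype.bijective_iff_injective_and_card g).mpr ⟨hginj, by simp [hm]⟩
  obtain ⟨v, hv0⟩ := hbij.2 u0
  have hne := hve (Sum.inl u0) s(Sum.inl (g v), Sum.inr v) (KB_adj _ _)
    (by rw [hv0]; exact Sym2.mem_mk_left _ _)
  exact hne (hg v).symm


theorem stmt2 (n l : ℕ) (hn : 0 < n) (hl : 0 < l) :
    (∃ t, HasIntervalTotalColoring (completeBipartiteGraph (Fin n) (Fin (n * l))) t) ∧
    wtau (completeBipartiteGraph (Fin n) (Fin (n * l))) =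
      totalChromaticNumber (completeBipartiteGraph (Fin n) (Fin (n * l))) ∧
    (2 ≤ l → wtau (completeBipartiteGraph (Fin n) (Fin (n * l))) = n * l + 1) := by
  rcases eq_or_lt_of_le (show 1 ≤ l from hl) with hl1 | hl2
  · -- l = 1
    have hm : n * l = n := by rw [← hl1]; omega
    have hitc := constructionC (m := n * l) hn hm
    have hA : HasIntervalTotalColoring (completeBipartiteGraph (Fin n) (Fin (n * l))) (n + 2) :=
      ⟨_, _, hitc⟩
    have hlow : ∀ t ∈ {t | HasIntervalTotalColoring
        (completeBipartiteGraph (Fin n) (Fin (n * l))) t}, n + 2 ≤ t := by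
      rintro t ⟨cv, ce, htc, hcv, hce, -, -⟩
      exact lower_nn hn hm htc hcv hce
    have hw : wtau (completeBipartiteGraph (Fin n) (Fin (n * l))) = n + 2 :=
      sInf_eq_of hA hlow
    have hchrom : totalChromaticNumber (completeBipartiteGraph (Fin n) (Fin (n * l))) = n + 2 := by
      refine sInf_eq_of ⟨_, _, hitc.1, hitc.2.1, hitc.2.2.1⟩ ?_
      rintro t ⟨cv, ce, htc, hcv, hce⟩
      exact lower_nn hn hm htc hcv hce
    exact ⟨⟨n + 2, hA⟩, by rw [hw, hchrom], fun h2 => absurd h2 (by omega)⟩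
  · -- 2 ≤ l
    have hitc := constructionA (m := n * l) hn hl2 rfl
    have hA : HasIntervalTotalColoring (completeBipartiteGraph (Fin n) (Fin (n * l)))
        (n * l + 1) := ⟨_, _, hitc⟩
    have hlow : ∀ t ∈ {t | HasIntervalTotalColoring
        (completeBipartiteGraph (Fin n) (Fin (n * l))) t}, n * l + 1 ≤ t := by
      rintro t ⟨cv, ce, htc, hcv, hce, -, -⟩
      exact lower_m hn htc hcv hce
    have hw : wtau (completeBipartiteGraph (Fin n) (Fin (n * l))) = n * l + 1 :=
      sInf_eq_of hA hlow
    have hchrom : totalChromaticNumber (completeBipartiteGraph (Fin n) (Fin (n * l)))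
        = n * l + 1 := by
      refine sInf_eq_of ⟨_, _, hitc.1, hitc.2.1, hitc.2.2.1⟩ ?_
      rintro t ⟨cv, ce, htc, hcv, hce⟩
      exact lower_m hn htc hcv hce
    exact ⟨⟨n * l + 1, hA⟩, by rw [hw, hchrom], fun _ => hw⟩

end ITC
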